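/- arXiv:1802.01973 — 5 statements merged into one kernel-verified Lean document; each statement's English description precedes it below -/
import Mathlib

section
/- Let W ∈ L(H) be a positive operator, S ⊆ H a closed subspace, and T the shorted operator of W to S. Then M(W, ker T) = M(W, S), i.e. an operator X ∈ L(H) satisfies 0 ≤ X ≤ W and range X ⊆ (ker T)^⊥ if and only if 0 ≤ X ≤ W and range X ⊆ S^⊥. -/
open ContinuousLinearMap
open scoped ComplexInnerProductSpace

noncomputable section

variable {H : Type*} [NormedAddCommGroup H] [InnerProductSpace ℂ H] [CompleteSpace H]

/-- `M(W,S)`: the set of operators `X` with `0 ≤ X ≤ W` (Loewner order) and `range X ⊆ S^⊥`. -/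
def MSet (W : H →L[ℂ] H) (S : Submodule ℂ H) : Set (H →L[ℂ] H) :=
  {X | X.IsPositive ∧ (W - X).IsPositive ∧ LinearMap.range (X : H →ₗ[ℂ] H) ≤ Sᗮ}

/-- `T` is the shorted operator of `W` to `S`, i.e. the maximum of `M(W,S)` in the Loewner
order. -/
def IsShorted (W : H →L[ℂ] H) (S : Submodule ℂ H) (T : H →L[ℂ] H) : Prop :=
  T ∈ MSet W S ∧ ∀ X ∈ MSet W S, (T - X).IsPositive

/-- The minus order: `A ⁻≤ B` iff there are bounded idempotents `P, Q` with `A = PB` and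
`A* = QB*`. -/
def MinusLE (A B : H →L[ℂ] H) : Prop :=
  ∃ P Q : H →L[ℂ] H, IsIdempotentElem P ∧ IsIdempotentElem Q ∧
    A = P ∘L B ∧ adjoint A = Q ∘L adjoint B

/-- The pair `(W, N)` is compatible: there is a bounded idempotent `Q` with range `N` such that
`WQ` is selfadjoint. -/
def Compatible (W : H →L[ℂ] H) (N : Submodule ℂ H) : Prop :=
  ∃ Q : H →L[ℂ] H, IsIdempotentElem Q ∧ LinearMap.range (Q : H →ₗ[ℂ] H) = N ∧ IsSelfAdjoint (W ∘L Q)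

/-- `M⁻(W,S)`: operators `X` with `X ⁻≤ W`, `range X ⊆ S^⊥` and `range X* ⊆ S^⊥`. -/
def MMinusSet (W : H →L[ℂ] H) (S : Submodule ℂ H) : Set (H →L[ℂ] H) :=
  {X | MinusLE X W ∧ LinearMap.range (X : H →ₗ[ℂ] H) ≤ Sᗮ ∧ LinearMap.range (adjoint X : H →ₗ[ℂ] H) ≤ Sᗮ}

/-- `X₀` is a `W`-inverse of `M` in `R(C)`: for every `x`, `X₀ x` is a `W`-weighted least squares
solution of `M z = C x`. -/
def WInverseIn (W M C X₀ : H →L[ℂ] H) : Prop :=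
  ∀ x z : H, (⟪W (M (X₀ x) - C x), M (X₀ x) - C x⟫).re ≤ (⟪W (M z - C x), M z - C x⟫).re

/-- The left weighted star order `A ₋*_W≤ B`. -/
def LStarW (W A B : H →L[ℂ] H) : Prop :=
  LinearMap.range (B : H →ₗ[ℂ] H) = LinearMap.range (A : H →ₗ[ℂ] H) ⊔ LinearMap.range (B - A : H →ₗ[ℂ] H) ∧
  LinearMap.range (A : H →ₗ[ℂ] H) ⊓ LinearMap.range (B - A : H →ₗ[ℂ] H) = ⊥ ∧
  LinearMap.range (B - A : H →ₗ[ℂ] H) ≤ LinearMap.ker (adjoint A ∘L W : H →ₗ[ℂ] H)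

/-- The right weighted star order `A ≤*_W B`. -/
def RStarW (W A B : H →L[ℂ] H) : Prop :=
  LinearMap.range (adjoint B : H →ₗ[ℂ] H) =
    LinearMap.range (adjoint A : H →ₗ[ℂ] H) ⊔ LinearMap.range (adjoint B - adjoint A : H →ₗ[ℂ] H) ∧
  LinearMap.range (adjoint A : H →ₗ[ℂ] H) ⊓ LinearMap.range (adjoint B - adjoint A : H →ₗ[ℂ] H) = ⊥ ∧
  LinearMap.range (adjoint B - adjoint A : H →ₗ[ℂ] H) ≤ LinearMap.ker (A ∘L W : H →ₗ[ℂ] H)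

/-- The weighted star order `A *_W≤ B`. -/
def StarW (W A B : H →L[ℂ] H) : Prop :=
  LStarW W A B ∧ RStarW W A B

/-- A positive operator with vanishing quadratic form at `x` kills `x`. -/
lemma pos_apply_eq_zero_of_inner_self_eq_zero {X : H →L[ℂ] H} (hX : X.IsPositive)
    {x : H} (h : ⟪X x, x⟫ = 0) : X x = 0 := by
  obtain ⟨p, hp, -, hp2⟩ :=
    CFC.exists_sqrt_of_isSelfAdjoint_of_quasispectrumRestricts hX.isSelfAdjoint hX.spectrumRestricts
  have hpsymm := (isSelfAdjoint_iff_isSymmetric).mp hp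
  have hXx : ∀ y, X y = p (p y) := by
    intro y
    rw [← hp2]
    simp [sq]
  have : ⟪p x, p x⟫ = 0 := by
    calc ⟪p x, p x⟫ = ⟪p (p x), x⟫ := (hpsymm (p x) x).symm
    _ = ⟪X x, x⟫ := by rw [hXx]
    _ = 0 := h
  have hpx : p x = 0 := inner_self_eq_zero.mp this
  rw [hXx, hpx, map_zero]

/-- `M(W, ker T) = M(W, S)` for the shorted operator `T` of `W` to `S`. -/
theorem stmt0 (W T : H →L[ℂ] H) (S : Submodule ℂ H) (hS : IsClosed (S : Set H))
    (hW : W.IsPositive) (hT : IsShorted W S T) :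
    MSet W (LinearMap.ker (T : H →ₗ[ℂ] H)) = MSet W S := by
  obtain ⟨⟨hTpos, hWT, hTrange⟩, hmax⟩ := hT
  have hTsymm := (isSelfAdjoint_iff_isSymmetric).mp hTpos.isSelfAdjoint
  -- S ≤ ker T
  have hSker : S ≤ LinearMap.ker (T : H →ₗ[ℂ] H) := by
    intro s hs
    rw [LinearMap.mem_ker]
    refine pos_apply_eq_zero_of_inner_self_eq_zero hTpos ?_
    exact Submodule.inner_left_of_mem_orthogonal hs (hTrange ⟨s, rfl⟩)
  ext X
  simp only [MSet, Set.mem_setOf_eq]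
  constructor
  · rintro ⟨hX, hWX, hXr⟩
    exact ⟨hX, hWX, hXr.trans (Submodule.orthogonal_le hSker)⟩
  · rintro ⟨hX, hWX, hXr⟩
    refine ⟨hX, hWX, ?_⟩
    have hXT : (T - X).IsPositive := hmax X ⟨hX, hWX, hXr⟩
    have hXsymm := (isSelfAdjoint_iff_isSymmetric).mp hX.isSelfAdjoint
    -- ker T ≤ ker X
    have hker : ∀ x ∈ LinearMap.ker (T : H →ₗ[ℂ] H), X x = 0 := by
      intro x hx
      rw [LinearMap.mem_ker] at hx
      refine pos_apply_eq_zero_of_inner_self_eq_zero hX ?_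
      have h1 : 0 ≤ Complex.re ⟪X x, x⟫ := hX.re_inner_nonneg_left x
      have h2 : 0 ≤ Complex.re ⟪(T - X) x, x⟫ := hXT.re_inner_nonneg_left x
      have h3 : ⟪(T - X) x, x⟫ = -⟪X x, x⟫ := by
        simp [show T x = 0 from hx, inner_sub_left]
      rw [h3, Complex.neg_re, le_neg, neg_zero] at h2
      have hre : Complex.re ⟪X x, x⟫ = 0 := le_antisymm h2 h1
      have him : Complex.im ⟪X x, x⟫ = 0 := by
        have hreal : (starRingEnd ℂ) ⟪X x, x⟫ = ⟪X x, x⟫ := hXsymm.conj_inner_sym x x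
        exact Complex.conj_eq_iff_im.mp hreal
      exact Complex.ext hre him
    rintro _ ⟨y, rfl⟩
    rw [Submodule.mem_orthogonal]
    intro x hx
    calc ⟪x, X y⟫ = ⟪X x, y⟫ := (hXsymm x y).symm
    _ = 0 := by rw [hker x hx, inner_zero_left]
end
end

section
/- Let W ∈ L(H) be a positive operator, S ⊆ H a closed subspace, T the shorted operator of W to S, and W^{1/2} the unique positive square root of W. Then the pair (W, S) is compatible if and only if T ⁻≤ W (minus order) and W^{1/2}(S) is closed in range W^{1/2}, i.e. W^{1/2}(S) = closure(W^{1/2}(S)) ∩ range(W^{1/2}). -/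
open ContinuousLinearMap
open scoped ComplexInnerProductSpace

noncomputable section

variable {H : Type*} [NormedAddCommGroup H] [InnerProductSpace ℂ H] [CompleteSpace H]

set_option linter.unusedSectionVars false
set_option linter.unusedVariables false
set_option maxHeartbeats 1000000
lemma sa_move {A : H →L[ℂ] H} (hA : IsSelfAdjoint A) (x y : H) :
    ⟪A x, y⟫ = ⟪x, A y⟫ := by
  rw [← adjoint_inner_right, hA.adjoint_eq]

lemma inner_zero_of_mem_closure {v : H} {A : Set H} (h : ∀ a ∈ A, ⟪a, v⟫ = 0) {m : H}
    (hm : m ∈ closure A) : ⟪m, v⟫ = 0 := by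
  have hcl : IsClosed {a : H | ⟪a, v⟫ = 0} :=
    isClosed_eq (Continuous.inner continuous_id continuous_const) continuous_const
  exact closure_minimal (fun a ha => h a ha) hcl hm

lemma pos_antisymm {A B : H →L[ℂ] H} (h1 : (A - B).IsPositive) (h2 : (B - A).IsPositive) :
    A = B := by
  rw [← sub_eq_zero]
  have h3 : ∀ x, ⟪(A - B) x, x⟫ = 0 := by
    intro x
    have e1 := h1.2 x
    have e2 := h2.2 x
    rw [reApplyInnerSelf_apply] at e1 e2
    have hre : RCLike.re ⟪(A - B) x, x⟫ = 0 := by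
      have h5 : (B - A) x = -((A - B) x) := by simp [sub_apply]
      rw [h5, inner_neg_left, map_neg] at e2
      linarith
    have hsym := h1.isSymmetric
    have hconj : (starRingEnd ℂ) ⟪(A - B) x, x⟫ = ⟪(A - B) x, x⟫ := by
      rw [inner_conj_symm]; exact (hsym x x).symm
    have him : (⟪(A - B) x, x⟫).im = 0 := Complex.conj_eq_iff_im.mp hconj
    apply Complex.ext
    · exact hre
    · simpa using him
  have h4 := (inner_map_self_eq_zero ((A - B : H →L[ℂ] H) : H →ₗ[ℂ] H)).mp (fun x => h3 x)
  ext x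
  have h6 : ((A - B : H →L[ℂ] H) : H →ₗ[ℂ] H) x = 0 := by rw [h4]; rfl
  simpa using h6

lemma mset_apply_eq_zero {W X : H →L[ℂ] H} {S : Submodule ℂ H} (hX : X ∈ MSet W S) {s : H}
    (hs : s ∈ S) : X s = 0 := by
  have h : ∀ y, ⟪X s, y⟫ = 0 := by
    intro y
    rw [sa_move hX.1.isSelfAdjoint s y]
    exact (Submodule.mem_orthogonal S (X y)).mp (hX.2.2 ⟨y, rfl⟩) s hs
  exact inner_self_eq_zero.mp (h (X s))


/-- `(W,S)` is compatible iff `T ⁻≤ W` and `W^{1/2}(S)` is closed in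
`range W^{1/2}`, where `R = W^{1/2}` is the unique positive square root of `W`. -/
theorem stmt4 (W T R : H →L[ℂ] H) (S : Submodule ℂ H) (hS : IsClosed (S : Set H))
    (hW : W.IsPositive) (hT : IsShorted W S T)
    (hR : R.IsPositive) (hR2 : R ∘L R = W) :
    Compatible W S ↔
      MinusLE T W ∧
        (S.map (R : H →ₗ[ℂ] H) : Set H) = closure (S.map (R : H →ₗ[ℂ] H) : Set H) ∩ Set.range R := by
  have hRsa : IsSelfAdjoint R := hR.isSelfAdjoint
  have hWsa : IsSelfAdjoint W := hW.isSelfAdjoint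
  have hWapp : ∀ x, W x = R (R x) := fun x => by rw [← hR2]; rfl
  have hWinner : ∀ x y, ⟪W x, y⟫ = ⟪R x, R y⟫ := fun x y => by
    rw [hWapp]; exact sa_move hRsa (R x) y
  set M : Submodule ℂ H := (S.map (R : H →ₗ[ℂ] H)).topologicalClosure with hMdef
  have hMclosed : IsClosed (M : Set H) := Submodule.isClosed_topologicalClosure _
  haveI : CompleteSpace M := hMclosed.completeSpace_coe
  set PM : H →L[ℂ] H := M.subtypeL ∘L M.orthogonalProjectionOnto with hPMdef
  have hPMsa : IsSelfAdjoint PM := isSelfAdjoint_starProjection M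
  have hPMmem : ∀ x, PM x ∈ M := fun x => M.starProjection_apply_mem x
  have hPMperp : ∀ x, x - PM x ∈ Mᗮ := fun x => Submodule.sub_starProjection_mem_orthogonal (K := M) x
  have hRS_subM : ∀ s ∈ S, R s ∈ M := fun s hs =>
    Submodule.le_topologicalClosure _ (Submodule.mem_map_of_mem hs)
  set T0 : H →L[ℂ] H := R ∘L (1 - PM) ∘L R with hT0def
  have hT0app : ∀ x, T0 x = R (R x - PM (R x)) := fun x => by
    simp [hT0def, sub_apply, comp_apply]
  -- T0 belongs to MSet W S
  have hproj_pos : (1 - PM).IsPositive := by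
    refine isPositive_def'.mpr ⟨(IsSelfAdjoint.one (H →L[ℂ] H)).sub hPMsa, fun x => ?_⟩
    rw [reApplyInnerSelf_apply]
    have h1 : (1 - PM) x = x - PM x := by simp [sub_apply]
    rw [h1]
    have h2 : ⟪x - PM x, x⟫ = ⟪x - PM x, x - PM x⟫ + ⟪x - PM x, PM x⟫ := by
      rw [← inner_add_right, sub_add_cancel]
    rw [h2, Submodule.inner_left_of_mem_orthogonal (hPMmem x) (hPMperp x), add_zero,
      inner_self_eq_norm_sq]
    positivity
  have hPM_pos : PM.IsPositive := by
    refine isPositive_def'.mpr ⟨hPMsa, fun x => ?_⟩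
    rw [reApplyInnerSelf_apply]
    have h2 : ⟪PM x, x⟫ = ⟪PM x, PM x⟫ + ⟪PM x, x - PM x⟫ := by
      rw [← inner_add_right, add_sub_cancel]
    rw [h2, Submodule.inner_right_of_mem_orthogonal (hPMmem x) (hPMperp x), add_zero,
      inner_self_eq_norm_sq]
    positivity
  have hT0_pos : T0.IsPositive := by
    have h := hproj_pos.adjoint_conj R
    rwa [hRsa.adjoint_eq] at h
  have hT0_mem : T0 ∈ MSet W S := by
    refine ⟨hT0_pos, ?_, ?_⟩
    · have hWT0 : W - T0 = R ∘L PM ∘L R := by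
        ext x
        have h1 : W x = R (R x) := hWapp x
        simp [hT0def, sub_apply, comp_apply, h1, map_sub]
      rw [hWT0]
      have h := hPM_pos.adjoint_conj R
      rwa [hRsa.adjoint_eq] at h
    · rintro y ⟨x, rfl⟩
      rw [Submodule.mem_orthogonal]
      intro s hs
      have h1 : ⟪s, T0 x⟫ = ⟪R s, R x - PM (R x)⟫ := by
        rw [hT0app, ← sa_move hRsa s]
      change ⟪s, T0 x⟫ = 0
      rw [h1]
      exact Submodule.inner_right_of_mem_orthogonal (hRS_subM s hs) (hPMperp (R x))
  -- T0 is maximal in MSet W S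
  have hT0re : ∀ x, RCLike.re ⟪T0 x, x⟫ = ‖R x - PM (R x)‖ ^ 2 := by
    intro x
    rw [hT0app, sa_move hRsa]
    have h2 : ⟪R x - PM (R x), R x⟫ = ⟪R x - PM (R x), R x - PM (R x)⟫
        + ⟪R x - PM (R x), PM (R x)⟫ := by
      rw [← inner_add_right, sub_add_cancel]
    rw [h2, Submodule.inner_left_of_mem_orthogonal (hPMmem (R x)) (hPMperp (R x)), add_zero,
      inner_self_eq_norm_sq]
  have hmax : ∀ X ∈ MSet W S, ∀ x, RCLike.re ⟪X x, x⟫ ≤ RCLike.re ⟪T0 x, x⟫ := by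
    intro X hX x
    have key : ∀ m ∈ ((S.map (R : H →ₗ[ℂ] H) : Submodule ℂ H) : Set H),
        RCLike.re ⟪X x, x⟫ ≤ ‖R x - m‖ ^ 2 := by
      rintro m ⟨s, hs, rfl⟩
      have hXs : X s = 0 := mset_apply_eq_zero hX hs
      have e1 : ⟪X (x - s), x - s⟫ = ⟪X x, x⟫ := by
        rw [map_sub, hXs, sub_zero, inner_sub_right, sa_move hX.1.isSelfAdjoint x s, hXs, inner_zero_right,
          sub_zero]
      have e2 : RCLike.re ⟪X (x - s), x - s⟫ ≤ RCLike.re ⟪W (x - s), x - s⟫ := by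
        have h0 := hX.2.1.2 (x - s)
        rw [reApplyInnerSelf_apply, sub_apply, inner_sub_left, map_sub] at h0
        linarith
      have e3 : RCLike.re ⟪W (x - s), x - s⟫ = ‖R x - R s‖ ^ 2 := by
        rw [hWinner, ← map_sub, inner_self_eq_norm_sq, map_sub]
      rw [← e1]
      rw [e3] at e2
      exact e2
    have hmemcl : PM (R x) ∈ closure ((S.map (R : H →ₗ[ℂ] H) : Submodule ℂ H) : Set H) := by
      have h := hPMmem (R x)
      rw [hMdef] at h
      exact h
    have hcl : IsClosed {m : H | RCLike.re ⟪X x, x⟫ ≤ ‖R x - m‖ ^ 2} := by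
      apply isClosed_le continuous_const
      fun_prop
    have h5 := closure_minimal key hcl hmemcl
    rw [hT0re]
    exact h5
  have hmax' : ∀ X ∈ MSet W S, (T0 - X).IsPositive := by
    intro X hX
    refine isPositive_def'.mpr ⟨hT0_mem.1.isSelfAdjoint.sub hX.1.isSelfAdjoint, fun x => ?_⟩
    rw [reApplyInnerSelf_apply, sub_apply, inner_sub_left, map_sub]
    have h6 := hmax X hX x
    linarith
  have hTT0 : T = T0 := pos_antisymm (hT.2 T0 hT0_mem) (hmax' T hT.1)
  constructor
  · -- forward direction
    rintro ⟨Q, hQidem, hQrange, hQWsa⟩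
    have hQQ : ∀ x, Q (Q x) = Q x := fun x => by
      have h := congrArg (fun (A : H →L[ℂ] H) => A x) hQidem
      simpa [ContinuousLinearMap.mul_apply] using h
    have hQfix : ∀ s ∈ S, Q s = s := by
      intro s hs
      rw [← hQrange] at hs
      obtain ⟨y, rfl⟩ := hs
      exact hQQ y
    have hQWc : (adjoint Q) ∘L W = W ∘L Q := by
      have h1 : adjoint (W ∘L Q) = W ∘L Q := isSelfAdjoint_iff'.mp hQWsa
      rwa [adjoint_comp, hWsa.adjoint_eq] at h1
    have hQWpt : ∀ x, adjoint Q (W x) = W (Q x) := fun x =>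
      congrArg (fun (A : H →L[ℂ] H) => A x) hQWc
    have hadj1Q : adjoint (1 - Q) = 1 - adjoint Q := by
      rw [map_sub]
      congr 1
      rw [one_def, adjoint_id]
    have hkey : adjoint (1 - Q) ∘L W ∘L (1 - Q) = W ∘L (1 - Q) := by
      ext x
      simp only [comp_apply, sub_apply, one_apply_eq_self, hadj1Q, map_sub, hQWpt, hQQ]
      abel
    have hWQpos : (W ∘L (1 - Q)).IsPositive := by
      have h := hW.adjoint_conj (1 - Q)
      rwa [hkey] at h
    have hkey2 : adjoint Q ∘L W ∘L Q = W ∘L Q := by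
      ext x
      simp only [comp_apply]
      rw [hQWpt, hQQ]
    have hWQmem : W ∘L (1 - Q) ∈ MSet W S := by
      refine ⟨hWQpos, ?_, ?_⟩
      · have h7 : W - W ∘L (1 - Q) = W ∘L Q := by
          ext x; simp [sub_apply, comp_apply, map_sub]
        rw [h7, ← hkey2]
        exact hW.adjoint_conj Q
      · rintro y ⟨x, rfl⟩
        rw [Submodule.mem_orthogonal]
        intro s hs
        have h1 : (W ∘L (1 - Q)) x = (adjoint (1 - Q)) ((W ∘L (1 - Q)) x) :=
          congrArg (fun (A : H →L[ℂ] H) => A x) hkey.symm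
        change ⟪s, (W ∘L (1 - Q)) x⟫ = 0
        rw [h1, adjoint_inner_right]
        have h8 : (1 - Q) s = 0 := by simp [sub_apply, hQfix s hs]
        rw [h8, inner_zero_left]
    have hWQmax : ∀ X ∈ MSet W S, ((W ∘L (1 - Q)) - X).IsPositive := by
      intro X hX
      have hXQ : ∀ x, X (Q x) = 0 := fun x =>
        mset_apply_eq_zero hX (hQrange ▸ LinearMap.mem_range_self _ x)
      have hQX : ∀ x, adjoint Q (X x) = 0 := by
        intro x
        have h : ∀ y, ⟪adjoint Q (X x), y⟫ = 0 := by
          intro y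
          rw [adjoint_inner_left, sa_move hX.1.isSelfAdjoint x (Q y), hXQ, inner_zero_right]
        exact inner_self_eq_zero.mp (h _)
      have hXid : adjoint (1 - Q) ∘L (W - X) ∘L (1 - Q) = W ∘L (1 - Q) - X := by
        ext x
        simp only [comp_apply, sub_apply, one_apply_eq_self, hadj1Q, map_sub, hQWpt, hQQ, hXQ, hQX,
          map_zero, sub_zero]
        abel
      rw [← hXid]
      exact hX.2.1.adjoint_conj (1 - Q)
    have hTWQ : T = W ∘L (1 - Q) := pos_antisymm (hT.2 _ hWQmem) (hWQmax T hT.1)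
    have hQadj_idem : IsIdempotentElem (adjoint Q) := by
      have h9 : adjoint Q * adjoint Q = adjoint (Q * Q) := by
        rw [show Q * Q = Q ∘L Q from rfl, adjoint_comp]; rfl
      rw [IsIdempotentElem, h9, hQidem]
    constructor
    · refine ⟨1 - adjoint Q, 1 - adjoint Q, hQadj_idem.one_sub, hQadj_idem.one_sub, ?_, ?_⟩
      · rw [hTWQ]
        ext x
        simp only [comp_apply, sub_apply, one_apply_eq_self, map_sub, hQWpt]
      · have hTsa : IsSelfAdjoint T := hT.1.1.isSelfAdjoint
        rw [hTsa.adjoint_eq, hWsa.adjoint_eq, hTWQ]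
        ext x
        simp only [comp_apply, sub_apply, one_apply_eq_self, map_sub, hQWpt]
    · apply Set.Subset.antisymm
      · intro y hy
        exact ⟨subset_closure hy, by
          obtain ⟨s, _, rfl⟩ := hy
          exact ⟨s, rfl⟩⟩
      · rintro y ⟨hyc, x, rfl⟩
        have hQxS : Q x ∈ S := hQrange ▸ LinearMap.mem_range_self _ x
        have hv2 : ∀ m ∈ ((S.map (R : H →ₗ[ℂ] H) : Submodule ℂ H) : Set H), ⟪m, R x - R (Q x)⟫ = 0 := by
          rintro m ⟨s, hs, rfl⟩
          change ⟪R s, R x - R (Q x)⟫ = 0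
          have h1 : R x - R (Q x) = R (x - Q x) := (map_sub R x (Q x)).symm
          have h2 : W (x - Q x) = (W ∘L (1 - Q)) x := by simp [comp_apply, sub_apply]
          rw [h1, sa_move hRsa s (R (x - Q x)), ← hWapp, h2]
          exact (Submodule.mem_orthogonal S _).mp (hWQmem.2.2 ⟨x, rfl⟩) s hs
        have h3 : R x ∈ (S.map (R : H →ₗ[ℂ] H)).topologicalClosure := by
          rw [← SetLike.mem_coe, Submodule.topologicalClosure_coe]
          exact hyc
        have h4 : R (Q x) ∈ (S.map (R : H →ₗ[ℂ] H)).topologicalClosure :=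
          Submodule.le_topologicalClosure _ (Submodule.mem_map_of_mem hQxS)
        have hvM : R x - R (Q x) ∈ closure ((S.map (R : H →ₗ[ℂ] H) : Submodule ℂ H) : Set H) := by
          have h5 := Submodule.sub_mem _ h3 h4
          rwa [← SetLike.mem_coe, Submodule.topologicalClosure_coe] at h5
        have hv0 : R x = R (Q x) := by
          rw [← sub_eq_zero]
          exact inner_self_eq_zero.mp (inner_zero_of_mem_closure hv2 hvM)
        rw [hv0]
        exact ⟨Q x, hQxS, rfl⟩
  · -- backward direction
    rintro ⟨⟨P, Q0, hPidem, hQ0idem, hTP, hTQ⟩, hC⟩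
    set G : H →L[ℂ] H := adjoint Q0 with hGdef
    have hTG : T = W ∘L G := by
      have h := congrArg adjoint hTQ
      rwa [adjoint_adjoint, adjoint_comp, adjoint_adjoint] at h
    have key : ∀ x, PM (R x) = R (x - G x) := by
      intro x
      set u : H := (R x - PM (R x)) - R (G x) with hudef
      have hRu : R u = 0 := by
        have h1 : R ((R x - PM (R x))) = T0 x := (hT0app x).symm
        have h2 : R (R (G x)) = W (G x) := (hWapp (G x)).symm
        rw [hudef, map_sub, h1, h2, ← hTT0, hTG, sub_eq_zero]
        rfl
      have huK : u ∈ closure (Set.range R) := by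
        have h3 : R x ∈ (LinearMap.range (R : H →ₗ[ℂ] H)).topologicalClosure :=
          Submodule.le_topologicalClosure _ (LinearMap.mem_range_self _ x)
        have h4 : R (G x) ∈ (LinearMap.range (R : H →ₗ[ℂ] H)).topologicalClosure :=
          Submodule.le_topologicalClosure _ (LinearMap.mem_range_self _ (G x))
        have h5 : PM (R x) ∈ (LinearMap.range (R : H →ₗ[ℂ] H)).topologicalClosure := by
          have h6 : M ≤ (LinearMap.range (R : H →ₗ[ℂ] H)).topologicalClosure := by
            rw [hMdef]
            apply Submodule.topologicalClosure_mono
            exact LinearMap.map_le_range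
          exact h6 (hPMmem (R x))
        have h7 := Submodule.sub_mem _ (Submodule.sub_mem _ h3 h5) h4
        rwa [← SetLike.mem_coe, Submodule.topologicalClosure_coe] at h7
      have hperp : ∀ a ∈ Set.range R, ⟪a, u⟫ = 0 := by
        rintro a ⟨z, rfl⟩
        rw [sa_move hRsa z u, hRu, inner_zero_right]
      have hu0 : u = 0 := inner_self_eq_zero.mp (inner_zero_of_mem_closure hperp huK)
      have h8 := sub_eq_zero.mp hu0
      rw [map_sub]
      rw [← h8]
      abel
    have hSdec : ∀ x : H, ∃ s ∈ S, R (x - s) ∈ Mᗮ := by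
      intro x
      have h1 : PM (R x) ∈ (S.map (R : H →ₗ[ℂ] H) : Set H) := by
        rw [hC]
        constructor
        · have h2 := hPMmem (R x)
          rw [hMdef, ← SetLike.mem_coe, Submodule.topologicalClosure_coe] at h2
          exact h2
        · exact ⟨x - G x, (key x).symm⟩
      obtain ⟨s, hs, hRs⟩ := h1
      refine ⟨s, hs, ?_⟩
      rw [map_sub, show R s = PM (R x) from hRs]
      exact hPMperp (R x)
    set N : Submodule ℂ H := Mᗮ.comap (R : H →ₗ[ℂ] H) with hNdef
    have hNclosed : IsClosed (N : Set H) := by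
      have h1 : (N : Set H) = R ⁻¹' (Mᗮ : Set H) := rfl
      rw [h1]
      exact (Submodule.isClosed_orthogonal M).preimage R.continuous
    set SN : Submodule ℂ H := S ⊓ N with hSNdef
    have hSNclosed : IsClosed (SN : Set H) := by
      rw [hSNdef, Submodule.coe_inf]
      exact hS.inter hNclosed
    haveI : CompleteSpace SN := hSNclosed.completeSpace_coe
    set N1 : Submodule ℂ H := N ⊓ SNᗮ with hN1def
    have hN1closed : IsClosed (N1 : Set H) := by
      rw [hN1def, Submodule.coe_inf]
      exact hNclosed.inter (Submodule.isClosed_orthogonal SN)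
    have hN1N : N1 ≤ N := inf_le_left
    have hdisj : S ⊓ N1 = ⊥ := by
      rw [Submodule.eq_bot_iff]
      intro x hx
      have hx1 : x ∈ SN := ⟨hx.1, hx.2.1⟩
      have hx2 : x ∈ SNᗮ := hx.2.2
      exact inner_self_eq_zero.mp (Submodule.inner_right_of_mem_orthogonal hx1 hx2)
    have hcodis : S ⊔ N1 = ⊤ := by
      rw [Submodule.eq_top_iff']
      intro x
      obtain ⟨s, hs, hsn⟩ := hSdec x
      set n : H := x - s with hndef
      have hn : n ∈ N := hsn
      set a : H := SN.starProjection n with hadef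
      have haSN : a ∈ SN := SN.starProjection_apply_mem n
      have hbperp : n - a ∈ SNᗮ := Submodule.sub_starProjection_mem_orthogonal (K := SN) n
      have hbN : n - a ∈ N := N.sub_mem hn haSN.2
      have hx : x = (s + a) + (n - a) := by rw [hndef]; abel
      rw [hx]
      exact Submodule.add_mem_sup (S.add_mem hs haSN.1) ⟨hbN, hbperp⟩
    have hcompl : IsCompl S N1 := ⟨disjoint_iff.mpr hdisj, codisjoint_iff.mpr hcodis⟩
    set Q : H →L[ℂ] H := S.subtypeL ∘L S.linearProjOfClosedCompl N1 hcompl hS hN1closed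
      with hQdef
    have hQmem : ∀ x, Q x ∈ S := fun x => (S.linearProjOfClosedCompl N1 hcompl hS hN1closed x).2
    have hQS : ∀ s ∈ S, Q s = s := by
      intro s hs
      have h := Submodule.projectionOnto_apply_left hcompl ⟨s, hs⟩
      have h2 : Q s = ((S.projectionOnto N1 hcompl) s : H) := by
        rw [hQdef]
        rfl
      rw [h2, h]
    have hQN1 : ∀ n ∈ N1, Q n = 0 := by
      intro n hn
      have h := Submodule.projectionOnto_apply_right hcompl ⟨n, hn⟩
      have h2 : Q n = ((S.projectionOnto N1 hcompl) n : H) := by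
        rw [hQdef]
        rfl
      rw [h2, h]
      rfl
    have hkerN : ∀ x, x - Q x ∈ N1 := by
      intro x
      have hxt : x ∈ S ⊔ N1 := by rw [hcodis]; trivial
      obtain ⟨a, ha, b, hb, rfl⟩ := Submodule.mem_sup.mp hxt
      have h2 : Q (a + b) = a := by
        rw [map_add, hQS a ha, hQN1 b hb, add_zero]
      rw [h2]
      simpa using hb
    refine ⟨Q, ?_, ?_, ?_⟩
    · ext x
      exact hQS (Q x) (hQmem x)
    · apply le_antisymm
      · rintro y ⟨x, rfl⟩
        exact hQmem x
      · intro s hs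
        exact ⟨s, hQS s hs⟩
    · have hNS : ∀ n ∈ N, ∀ s ∈ S, ⟪W n, s⟫ = 0 := by
        intro n hn s hs
        rw [hWinner]
        exact Submodule.inner_left_of_mem_orthogonal (hRS_subM s hs) hn
      have hNS' : ∀ n ∈ N, ∀ s ∈ S, ⟪s, W n⟫ = 0 := by
        intro n hn s hs
        rw [← inner_conj_symm, hNS n hn s hs, map_zero]
      have h : ∀ x y, ⟪(W ∘L Q) x, y⟫ = ⟪x, (W ∘L Q) y⟫ := by
        intro x y
        have hy : (y : H) = Q y + (y - Q y) := by abel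
        have hx : (x : H) = Q x + (x - Q x) := by abel
        calc ⟪W (Q x), y⟫ = ⟪W (Q x), Q y + (y - Q y)⟫ := by rw [← hy]
          _ = ⟪W (Q x), Q y⟫ + ⟪W (Q x), y - Q y⟫ := by rw [inner_add_right]
          _ = ⟪W (Q x), Q y⟫ := by
              rw [sa_move hWsa (Q x) (y - Q y), hNS' _ (hN1N (hkerN y)) _ (hQmem x), add_zero]
          _ = ⟪Q x + (x - Q x), W (Q y)⟫ := by
              rw [inner_add_left, sa_move hWsa (Q x) (Q y), ← sa_move hWsa (x - Q x) (Q y),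
                hNS _ (hN1N (hkerN x)) _ (hQmem y), add_zero]
          _ = ⟪x, W (Q y)⟫ := by rw [← hx]
      exact isSelfAdjoint_iff'.mpr ((eq_adjoint_iff _ _).mpr h).symm
end
end

section
/- Let W ∈ L(H) be a positive operator and A, B ∈ L(H) operators with closed range such that ker B = ker(A*W), and let T be the shorted operator of W to range A. Then T is a lower bound for the set {(AXB − I)*W(AXB − I) : X ∈ L(H)} with respect to the minus order (i.e. T ⁻≤ (AXB − I)*W(AXB − I) for every X ∈ L(H)) if and only if the pair (W, ker T) is compatible. -/
open ContinuousLinearMap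
open scoped ComplexInnerProductSpace

noncomputable section

variable {H : Type*} [NormedAddCommGroup H] [InnerProductSpace ℂ H] [CompleteSpace H]

/- Auxiliary lemmas -/

private lemma aux_sa_conj {T : H →L[ℂ] H} (h : IsSelfAdjoint T) (x : H) :
    (starRingEnd ℂ) ⟪T x, x⟫ = ⟪T x, x⟫ := by
  calc (starRingEnd ℂ) ⟪T x, x⟫ = ⟪x, T x⟫ := inner_conj_symm _ _
    _ = ⟪(ContinuousLinearMap.adjoint T) x, x⟫ := (adjoint_inner_left T x x).symm
    _ = ⟪T x, x⟫ := by rw [h.adjoint_eq]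

private lemma aux_antisymm {S T : H →L[ℂ] H} (h1 : (S - T).IsPositive)
    (h2 : (T - S).IsPositive) : S = T := by
  have key : ∀ x : H, ⟪(S - T) x, x⟫ = 0 := by
    intro x
    have a := h1.2 x
    have b := h2.2 x
    rw [ContinuousLinearMap.reApplyInnerSelf] at a b
    have hneg : (T - S) x = -((S - T) x) := by simp
    rw [hneg, inner_neg_left, map_neg] at b
    have hre : (⟪(S - T) x, x⟫).re = 0 := by
      have h0 : RCLike.re ⟪(S - T) x, x⟫ = 0 := le_antisymm (by linarith) a
      simpa using h0
    have him : (⟪(S - T) x, x⟫).im = 0 :=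
      Complex.conj_eq_iff_im.mp (aux_sa_conj h1.isSelfAdjoint x)
    exact Complex.ext hre him
  have h0 : ((S - T : H →L[ℂ] H) : H →ₗ[ℂ] H) = 0 := by
    rw [← inner_map_self_eq_zero]
    intro x
    simpa [inner_sub_left] using key x
  have : S - T = 0 := by
    ext x
    have := LinearMap.congr_fun h0 x
    simpa using this
  exact sub_eq_zero.mp this

private lemma aux_kill {T : H →L[ℂ] H} (hsa : IsSelfAdjoint T)
    {S : Submodule ℂ H} (hr : LinearMap.range (T : H →ₗ[ℂ] H) ≤ Sᗮ) {s : H} (hs : s ∈ S) : T s = 0 := by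
  have h1 : ⟪s, T (T s)⟫ = 0 :=
    (Submodule.mem_orthogonal S (T (T s))).mp (hr ⟨T s, rfl⟩) s hs
  have h2 : ⟪T s, T s⟫ = 0 := by
    calc ⟪T s, T s⟫ = ⟪s, (ContinuousLinearMap.adjoint T) (T s)⟫ :=
          (adjoint_inner_right T s (T s)).symm
      _ = ⟪s, T (T s)⟫ := by rw [hsa.adjoint_eq]
      _ = 0 := h1
  exact inner_self_eq_zero.mp h2

private lemma aux_idem_fix {Q : H →L[ℂ] H} (hQ : IsIdempotentElem Q) {v : H}
    (hv : v ∈ LinearMap.range (Q : H →ₗ[ℂ] H)) : Q v = v := by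
  obtain ⟨u, rfl⟩ := hv
  have := ContinuousLinearMap.ext_iff.mp hQ u
  simpa [ContinuousLinearMap.mul_apply] using this

set_option maxHeartbeats 2000000 in
/-- `T` is a minus-order lower bound of `{(AXB - I)* W (AXB - I)}` iff
`(W, ker T)` is compatible. -/
theorem stmt7 (W A B T : H →L[ℂ] H) (hW : W.IsPositive)
    (hA : IsClosed (LinearMap.range (A : H →ₗ[ℂ] H) : Set H)) (hB : IsClosed (LinearMap.range (B : H →ₗ[ℂ] H) : Set H))
    (hker : LinearMap.ker (B : H →ₗ[ℂ] H) = LinearMap.ker (adjoint A ∘L W : H →ₗ[ℂ] H))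
    (hT : IsShorted W (LinearMap.range (A : H →ₗ[ℂ] H)) T) :
    (∀ X : H →L[ℂ] H,
        MinusLE T (adjoint (A ∘L X ∘L B - 1) ∘L (W ∘L (A ∘L X ∘L B - 1)))) ↔
      Compatible W (LinearMap.ker (T : H →ₗ[ℂ] H)) := by
  obtain ⟨⟨hTpos, hWT, hTr⟩, hTmax⟩ := hT
  have hTsa : IsSelfAdjoint T := hTpos.isSelfAdjoint
  have hWsa : IsSelfAdjoint W := hW.isSelfAdjoint
  have hTA : ∀ y, T (A y) = 0 := fun y => aux_kill hTsa hTr ⟨y, rfl⟩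
  constructor
  · -- minus lower bound → compatible
    intro h
    have h0 := h 0
    have e1 : A ∘L (0 : H →L[ℂ] H) ∘L B - 1 = -(1 : H →L[ℂ] H) := by
      ext x; simp
    have e2 : ContinuousLinearMap.adjoint (-(1 : H →L[ℂ] H)) = -1 := by
      rw [← ContinuousLinearMap.star_eq_adjoint]; simp
    have hM0 : ContinuousLinearMap.adjoint (A ∘L (0 : H →L[ℂ] H) ∘L B - 1) ∘L
        (W ∘L (A ∘L (0 : H →L[ℂ] H) ∘L B - 1)) = W := by
      rw [e1, e2]; ext x; simp
    rw [hM0] at h0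
    obtain ⟨P, Q', hPi, _, h1, _⟩ := h0
    -- W ∘L P† = T
    have hWP : W ∘L ContinuousLinearMap.adjoint P = T := by
      have := congrArg ContinuousLinearMap.adjoint h1
      rw [adjoint_comp, hWsa.adjoint_eq, hTsa.adjoint_eq] at this
      exact this.symm
    have hPP : P ∘L P = P := hPi
    -- T ∘L P† = T
    have hTP : T ∘L ContinuousLinearMap.adjoint P = T := by
      calc T ∘L ContinuousLinearMap.adjoint P
          = (P ∘L W) ∘L ContinuousLinearMap.adjoint P := by rw [← h1]
        _ = P ∘L (W ∘L ContinuousLinearMap.adjoint P) := by rw [ContinuousLinearMap.comp_assoc]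
        _ = P ∘L (P ∘L W) := by rw [hWP, h1]
        _ = (P ∘L P) ∘L W := by rw [ContinuousLinearMap.comp_assoc]
        _ = P ∘L W := by rw [hPP]
        _ = T := h1.symm
    have hTPap : ∀ v, T (ContinuousLinearMap.adjoint P v) = T v :=
      fun v => ContinuousLinearMap.ext_iff.mp hTP v
    have hWPap : ∀ v, W (ContinuousLinearMap.adjoint P v) = T v :=
      fun v => ContinuousLinearMap.ext_iff.mp hWP v
    -- the orthogonal projection onto ker T
    haveI : CompleteSpace (LinearMap.ker (T : H →ₗ[ℂ] H)) :=
      (ContinuousLinearMap.isClosed_ker T).completeSpace_coe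
    set PN : H →L[ℂ] H :=
      (LinearMap.ker (T : H →ₗ[ℂ] H)).subtypeL ∘L Submodule.orthogonalProjection (LinearMap.ker (T : H →ₗ[ℂ] H)) with hPN
    have hPNmem : ∀ x, T (PN x) = 0 := fun x =>
      (Submodule.orthogonalProjection (LinearMap.ker (T : H →ₗ[ℂ] H)) x).2
    have hPNfix : ∀ v, T v = 0 → PN v = v := by
      intro v hv
      show ((Submodule.orthogonalProjection (LinearMap.ker (T : H →ₗ[ℂ] H)) v : LinearMap.ker (T : H →ₗ[ℂ] H)) : H) = v
      exact Submodule.starProjection_eq_self_iff.mpr hv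
    set Q₂ : H →L[ℂ] H :=
      (1 - ContinuousLinearMap.adjoint P) + ContinuousLinearMap.adjoint P ∘L PN with hQ₂
    have hQ₂app : ∀ x, Q₂ x = x - ContinuousLinearMap.adjoint P x
        + ContinuousLinearMap.adjoint P (PN x) := fun x => rfl
    have hQ₂mem : ∀ x, T (Q₂ x) = 0 := by
      intro x
      rw [hQ₂app, map_add, map_sub, hTPap, hTPap, hPNmem]
      simp
    have hQ₂fix : ∀ v, T v = 0 → Q₂ v = v := by
      intro v hv
      rw [hQ₂app, hPNfix v hv]
      simp
    refine ⟨Q₂, ?_, ?_, ?_⟩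
    · show Q₂ * Q₂ = Q₂
      ext x
      rw [ContinuousLinearMap.mul_apply]
      exact hQ₂fix _ (hQ₂mem x)
    · apply le_antisymm
      · rintro v ⟨x, rfl⟩
        exact LinearMap.mem_ker.mpr (hQ₂mem x)
      · intro v hv
        exact ⟨v, hQ₂fix v (LinearMap.mem_ker.mp hv)⟩
    · have : W ∘L Q₂ = W - T := by
        ext x
        rw [ContinuousLinearMap.comp_apply, hQ₂app, map_add, map_sub, hWPap, hWPap, hPNmem]
        simp
      rw [this]
      exact hWsa.sub hTsa
  · -- compatible → minus lower bound
    rintro ⟨Q₀, hQi, hQr, hQsa⟩ X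
    have hQQ : ∀ v, Q₀ (Q₀ v) = Q₀ v := fun v => by
      have := ContinuousLinearMap.ext_iff.mp hQi v
      simpa [ContinuousLinearMap.mul_apply] using this
    have hQker : ∀ v, T (Q₀ v) = 0 := fun v =>
      LinearMap.mem_ker.mp (hQr ▸ LinearMap.mem_range_self _ v)
    have hQfix : ∀ v, T v = 0 → Q₀ v = v := fun v hv =>
      aux_idem_fix hQi (hQr ▸ LinearMap.mem_ker.mpr hv)
    -- adjoint Q₀ ∘L W = W ∘L Q₀
    have hQW : ContinuousLinearMap.adjoint Q₀ ∘L W = W ∘L Q₀ := by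
      have h := hQsa.adjoint_eq
      rw [adjoint_comp, hWsa.adjoint_eq] at h
      exact h
    have hQWap : ∀ v, ContinuousLinearMap.adjoint Q₀ (W v) = W (Q₀ v) :=
      fun v => ContinuousLinearMap.ext_iff.mp hQW v
    have hQWQ : ∀ v, ContinuousLinearMap.adjoint Q₀ (W (Q₀ v)) = W (Q₀ v) := fun v => by
      rw [hQWap, hQQ]
    -- the candidate D = W - W Q₀
    set D : H →L[ℂ] H := W - W ∘L Q₀ with hD
    have hDapp : ∀ x, D x = W (x - Q₀ x) := by
      intro x; rw [map_sub]; rfl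
    have hDinner : ∀ x, ⟪D x, x⟫ = ⟪W (x - Q₀ x), x - Q₀ x⟫ := by
      intro x
      have hsplit : ⟪D x, x⟫ = ⟪D x, x - Q₀ x⟫ + ⟪D x, Q₀ x⟫ := by
        rw [← inner_add_right, sub_add_cancel]
      have hz : ⟪D x, Q₀ x⟫ = 0 := by
        rw [hDapp, ← adjoint_inner_left, hQWap, map_sub, hQQ, sub_self, map_zero,
          inner_zero_left]
      rw [hsplit, hz, add_zero, hDapp]
    have hDsa : IsSelfAdjoint D := hWsa.sub hQsa
    have hDpos : D.IsPositive := by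
      refine ⟨hDsa.isSymmetric, fun x => ?_⟩
      rw [ContinuousLinearMap.reApplyInnerSelf, hDinner]
      exact hW.2 (x - Q₀ x)
    have hWD : (W - D).IsPositive := by
      have hWDeq : W - D = W ∘L Q₀ := by rw [hD]; abel
      rw [hWDeq]
      refine ⟨hQsa.isSymmetric, fun x => ?_⟩
      rw [ContinuousLinearMap.reApplyInnerSelf]
      have h1 : ⟪(W ∘L Q₀) x, x⟫ = ⟪W (Q₀ x), Q₀ x⟫ := by
        have h2 := adjoint_inner_left Q₀ x (W (Q₀ x))
        rw [hQWQ] at h2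
        simpa using h2
      rw [h1]
      exact hW.2 (Q₀ x)
    have hDr : LinearMap.range (D : H →ₗ[ℂ] H) ≤ (LinearMap.range (A : H →ₗ[ℂ] H))ᗮ := by
      rintro v ⟨x, rfl⟩
      rw [Submodule.mem_orthogonal]
      rintro u ⟨y, rfl⟩
      have hfix : Q₀ (A y) = A y := hQfix _ (hTA y)
      have hQD : ContinuousLinearMap.adjoint Q₀ (D x) = 0 := by
        rw [hDapp, hQWap, map_sub, hQQ, sub_self, map_zero]
      calc ⟪A y, D x⟫ = ⟪Q₀ (A y), D x⟫ := by rw [hfix]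
        _ = ⟪A y, ContinuousLinearMap.adjoint Q₀ (D x)⟫ := adjoint_inner_right Q₀ _ _ |>.symm
        _ = 0 := by rw [hQD, inner_zero_right]
    have hTD1 : (T - D).IsPositive := hTmax D ⟨hDpos, hWD, hDr⟩
    have hDT : (D - T).IsPositive := by
      refine ⟨(hDsa.sub hTsa).isSymmetric, fun x => ?_⟩
      have hTy : T (x - Q₀ x) = T x := by rw [map_sub, hQker, sub_zero]
      have hTinner : ⟪T x, x⟫ = ⟪T (x - Q₀ x), x - Q₀ x⟫ := by
        rw [hTy, inner_sub_right]
        have hz2 : ⟪T x, Q₀ x⟫ = 0 := by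
          have h3 := adjoint_inner_left T (Q₀ x) x
          rw [hTsa.adjoint_eq, hQker, inner_zero_right] at h3
          exact h3
        rw [hz2, sub_zero]
      have hWTx := hWT.2 (x - Q₀ x)
      rw [ContinuousLinearMap.reApplyInnerSelf, ContinuousLinearMap.sub_apply,
        inner_sub_left, map_sub] at hWTx
      show 0 ≤ RCLike.re ⟪(D - T) x, x⟫
      rw [ContinuousLinearMap.sub_apply, inner_sub_left, map_sub, hDinner, hTinner]
      linarith [hWTx]
    have hTeqD : T = D := aux_antisymm hTD1 hDT
    have hWQ : W ∘L Q₀ = W - T := by rw [hTeqD, hD]; abel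
    have hWQap : ∀ v, W (Q₀ v) = W v - T v := fun v => by
      have := ContinuousLinearMap.ext_iff.mp hWQ v
      simpa using this
    -- adjoint A kills T
    have hATop : ContinuousLinearMap.adjoint A ∘L T = 0 := by
      have hTA' : T ∘L A = 0 := by ext y; simpa using hTA y
      have := congrArg ContinuousLinearMap.adjoint hTA'
      rw [adjoint_comp, hTsa.adjoint_eq] at this
      simpa using this
    have hATap : ∀ v, ContinuousLinearMap.adjoint A (T v) = 0 := fun v => by
      have := ContinuousLinearMap.ext_iff.mp hATop v
      simpa using this
    -- B (x - Q₀ x) = 0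
    have hBQ : ∀ x, B (x - Q₀ x) = 0 := by
      intro x
      have hmem : x - Q₀ x ∈ LinearMap.ker (ContinuousLinearMap.adjoint A ∘L W : H →ₗ[ℂ] H) := by
        rw [LinearMap.mem_ker]
        rw [ContinuousLinearMap.coe_coe, ContinuousLinearMap.comp_apply, map_sub, map_sub, hWQap, map_sub, hATap]
        abel
      rw [← hker] at hmem
      exact LinearMap.mem_ker.mp hmem
    -- now the minus relation for arbitrary X
    set C : H →L[ℂ] H := A ∘L X ∘L B - 1 with hC
    set M : H →L[ℂ] H := ContinuousLinearMap.adjoint C ∘L (W ∘L C) with hM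
    have hCQ : ∀ x, C (x - Q₀ x) = -(x - Q₀ x) := by
      intro x
      rw [hC]
      rw [ContinuousLinearMap.sub_apply, ContinuousLinearMap.comp_apply,
        ContinuousLinearMap.comp_apply, hBQ, map_zero, map_zero, ContinuousLinearMap.one_apply,
        zero_sub]
    have hCadj : ContinuousLinearMap.adjoint C =
        ContinuousLinearMap.adjoint (X ∘L B) ∘L ContinuousLinearMap.adjoint A - 1 := by
      rw [hC, map_sub, adjoint_comp]
      congr 1
      rw [← ContinuousLinearMap.star_eq_adjoint]
      exact star_one _
    have hCTad : ∀ v, ContinuousLinearMap.adjoint C (T v) = -(T v) := by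
      intro v
      rw [hCadj, ContinuousLinearMap.sub_apply, ContinuousLinearMap.comp_apply, hATap,
        map_zero, ContinuousLinearMap.one_apply, zero_sub]
    have hMQ : ∀ x, M (x - Q₀ x) = T x := by
      intro x
      show (ContinuousLinearMap.adjoint C) ((W ∘L C) (x - Q₀ x)) = T x
      rw [ContinuousLinearMap.comp_apply, hCQ, map_neg, map_neg]
      have hWx : W (x - Q₀ x) = T x := by
        rw [map_sub, hWQap]; abel
      rw [hWx, hCTad, neg_neg]
    have hMT : M ∘L (1 - Q₀) = T := by
      ext x
      have := hMQ x
      simpa using this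
    have hMadj : ContinuousLinearMap.adjoint M = M := by
      rw [hM, adjoint_comp, adjoint_comp, adjoint_adjoint, hWsa.adjoint_eq,
        ContinuousLinearMap.comp_assoc]
    have hPi : IsIdempotentElem (ContinuousLinearMap.adjoint (1 - Q₀)) := by
      have h1 : IsIdempotentElem (1 - Q₀) := hQi.one_sub
      show _ * _ = _
      rw [← ContinuousLinearMap.star_eq_adjoint]
      calc star (1 - Q₀) * star (1 - Q₀) = star ((1 - Q₀) * (1 - Q₀)) := (star_mul _ _).symm
        _ = star (1 - Q₀) := by rw [h1]
    have hkey : ContinuousLinearMap.adjoint (1 - Q₀) ∘L M = T := by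
      have := congrArg ContinuousLinearMap.adjoint hMT
      rw [adjoint_comp, hMadj, hTsa.adjoint_eq] at this
      exact this
    exact ⟨ContinuousLinearMap.adjoint (1 - Q₀), ContinuousLinearMap.adjoint (1 - Q₀),
      hPi, hPi, hkey.symm, by rw [hTsa.adjoint_eq, hMadj]; exact hkey.symm⟩
end
end

section
/- Let W ∈ L(H) be a positive operator and A, B ∈ L(H) operators with closed range such that ker B = ker(A*W), and let T be the shorted operator of W to range A. Assume the pair (W, ker T) is compatible and that the subspace range A + W^{-1}((range A)^⊥) is closed. Then T is the infimum, with respect to the minus order, of the set {(AXB − I)*W(AXB − I) : X ∈ L(H)}: T ⁻≤ (AXB − I)*W(AXB − I) for every X ∈ L(H), and every D ∈ L(H) satisfying D ⁻≤ (AXB − I)*W(AXB − I) for all X ∈ L(H) satisfies D ⁻≤ T. -/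
open ContinuousLinearMap
open scoped ComplexInnerProductSpace

noncomputable section

variable {H : Type*} [NormedAddCommGroup H] [InnerProductSpace ℂ H] [CompleteSpace H]

set_option maxHeartbeats 1000000
set_option synthInstance.maxHeartbeats 400000

private lemma conj_pos {H : Type*} [NormedAddCommGroup H] [InnerProductSpace ℂ H]
    [CompleteSpace H] (M V : H →L[ℂ] H) (hM : M.IsPositive) :
    (star V * (M * V)).IsPositive := by
  have h := hM.adjoint_conj V
  simpa [star_eq_adjoint, mul_def, comp_assoc] using h

private lemma pos_apply_zero {H : Type*} [NormedAddCommGroup H] [InnerProductSpace ℂ H]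
    [CompleteSpace H] {P : H →L[ℂ] H} (hP : P.IsPositive) {x : H}
    (hx : ⟪P x, x⟫ = 0) : P x = 0 := by
  have h0 : (0 : H →L[ℂ] H) ≤ P := (nonneg_iff_isPositive P).2 hP
  set K : H →L[ℂ] H := CFC.sqrt P with hKdef
  have hKK : K * K = P := CFC.sqrt_mul_sqrt_self P h0
  have hKadj : adjoint K = K :=
    isSelfAdjoint_iff'.mp (IsSelfAdjoint.of_nonneg (CFC.sqrt_nonneg P))
  have h2 : ⟪K (K x), x⟫ = 0 := by rw [← ContinuousLinearMap.mul_apply, hKK]; exact hx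
  have h3 := adjoint_inner_left K x (K x)
  rw [hKadj] at h3
  have h1 : ⟪K x, K x⟫ = 0 := by rw [← h3]; exact h2
  have h4 : K x = 0 := inner_self_eq_zero.mp h1
  rw [← hKK, ContinuousLinearMap.mul_apply, h4, map_zero]

private lemma pos_antisymm_s8 {H : Type*} [NormedAddCommGroup H] [InnerProductSpace ℂ H]
    [CompleteSpace H] {P : H →L[ℂ] H} (h1 : P.IsPositive) (h2 : (-P).IsPositive) :
    P = 0 := by
  have ha : P ≤ 0 := by rw [le_def]; simpa using h2
  have hb : (0 : H →L[ℂ] H) ≤ P := (nonneg_iff_isPositive P).2 h1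
  exact le_antisymm ha hb

/-- if `(W, ker T)` is compatible and `range A + W⁻¹((range A)^⊥)` is closed,
then `T` is the minus-order infimum of `{(AXB - I)* W (AXB - I)}`. -/
theorem stmt8 (W A B T : H →L[ℂ] H) (hW : W.IsPositive)
    (hA : IsClosed (LinearMap.range (A : H →ₗ[ℂ] H) : Set H)) (hB : IsClosed (LinearMap.range (B : H →ₗ[ℂ] H) : Set H))
    (hker : LinearMap.ker (B : H →ₗ[ℂ] H) = LinearMap.ker (adjoint A ∘L W : H →ₗ[ℂ] H))
    (hT : IsShorted W (LinearMap.range (A : H →ₗ[ℂ] H)) T)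
    (hcomp : Compatible W (LinearMap.ker (T : H →ₗ[ℂ] H)))
    (hclosed : IsClosed
      ((LinearMap.range (A : H →ₗ[ℂ] H) ⊔ Submodule.comap (W : H →ₗ[ℂ] H) (LinearMap.range (A : H →ₗ[ℂ] H))ᗮ : Submodule ℂ H) : Set H)) :
    (∀ X : H →L[ℂ] H,
        MinusLE T (adjoint (A ∘L X ∘L B - 1) ∘L (W ∘L (A ∘L X ∘L B - 1)))) ∧
      ∀ D : H →L[ℂ] H,
        (∀ X : H →L[ℂ] H,
          MinusLE D (adjoint (A ∘L X ∘L B - 1) ∘L (W ∘L (A ∘L X ∘L B - 1)))) →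
        MinusLE D T := by
  obtain ⟨hTmem, hTmax⟩ := hT
  obtain ⟨hTpos, hWTpos, hTrange⟩ := hTmem
  obtain ⟨R, hRidem, hRrange, hWRsa⟩ := hcomp
  have hWadj : adjoint W = W := isSelfAdjoint_iff'.mp hW.isSelfAdjoint
  have hTadj : adjoint T = T := isSelfAdjoint_iff'.mp hTpos.isSelfAdjoint
  have hWstar : star W = W := by rw [star_eq_adjoint]; exact hWadj
  have hTstar : star T = T := by rw [star_eq_adjoint]; exact hTadj
  -- A* T = 0
  have hAT : star A * T = 0 := by
    ext x
    simp only [ContinuousLinearMap.mul_apply, zero_apply, star_eq_adjoint]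
    have hm : T x ∈ (LinearMap.range (A : H →ₗ[ℂ] H))ᗮ := hTrange ⟨x, rfl⟩
    have h1 : ⟪adjoint A (T x), adjoint A (T x)⟫ = 0 := by
      rw [adjoint_inner_left, inner_eq_zero_symm]
      exact (Submodule.mem_orthogonal _ _).1 hm _ ⟨adjoint A (T x), rfl⟩
    exact inner_self_eq_zero.mp h1
  -- T A = 0
  have hTA : T * A = 0 := by
    ext z
    simp only [ContinuousLinearMap.mul_apply, zero_apply]
    apply pos_apply_zero hTpos
    have hm : T (A z) ∈ (LinearMap.range (A : H →ₗ[ℂ] H))ᗮ := hTrange ⟨A z, rfl⟩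
    rw [inner_eq_zero_symm]
    exact (Submodule.mem_orthogonal _ _).1 hm _ ⟨z, rfl⟩
  have hTR : T * R = 0 := by
    ext x
    simp only [ContinuousLinearMap.mul_apply, zero_apply]
    have h : R x ∈ LinearMap.range (R : H →ₗ[ℂ] H) := LinearMap.mem_range_self (R : H →ₗ[ℂ] H) x
    rw [hRrange] at h
    exact LinearMap.mem_ker.mp h
  have hRstarT : star R * T = 0 := by
    have h := congrArg star hTR
    simpa [star_mul, hTstar] using h
  have hsRW : star R * W = W * R := by
    calc star R * W = star R * star W := by rw [hWstar]
      _ = star (W * R) := (star_mul W R).symm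
      _ = W * R := hWRsa
  have hWRp : star R * (W * R) = W * R := by
    rw [← mul_assoc, hsRW, mul_assoc, hRidem.eq]
  have e1 : star R * (W * (1 - R)) = 0 := by
    rw [← mul_assoc, hsRW, mul_sub, mul_one, mul_assoc, hRidem.eq, sub_self]
  have hG1 : (1 - star R) * (W * (1 - R)) = W * (1 - R) := by
    rw [sub_mul, one_mul, e1, sub_zero]
  have hGpos : (W * (1 - R)).IsPositive := by
    rw [← hG1]
    have h := conj_pos W (1 - R) hW
    simpa [star_sub, star_one] using h
  have hWGpos : (W * R).IsPositive := by
    rw [← hWRp]; exact conj_pos W R hW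
  have hSR : ∀ z : H, ∃ w, R w = A z := by
    intro z
    have h1 : T (A z) = 0 := by
      have := ContinuousLinearMap.ext_iff.mp hTA z
      simpa [ContinuousLinearMap.mul_apply] using this
    have h2 : A z ∈ LinearMap.ker (T : H →ₗ[ℂ] H) := LinearMap.mem_ker.mpr h1
    rw [← hRrange] at h2
    exact h2
  have hGrange : LinearMap.range ((W * (1 - R) : H →L[ℂ] H) : H →ₗ[ℂ] H) ≤ (LinearMap.range (A : H →ₗ[ℂ] H))ᗮ := by
    rintro _ ⟨x, rfl⟩
    rw [Submodule.mem_orthogonal]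
    rintro _ ⟨z, rfl⟩
    obtain ⟨w, hw⟩ := hSR z
    change ⟪A z, (W * (1 - R)) x⟫ = 0
    rw [← hw, ← adjoint_inner_right, ← star_eq_adjoint, ← ContinuousLinearMap.mul_apply, e1, zero_apply,
      inner_zero_right]
  have hGmem : (W * (1 - R)) ∈ MSet W (LinearMap.range (A : H →ₗ[ℂ] H)) := by
    refine ⟨hGpos, ?_, hGrange⟩
    rw [show W - W * (1 - R) = W * R from by noncomm_ring]
    exact hWGpos
  have hTGpos : (T - W * (1 - R)).IsPositive := hTmax _ hGmem
  have hGTpos : (W * (1 - R) - T).IsPositive := by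
    have h2 : T * (1 - R) = T := by rw [mul_sub, mul_one, hTR, sub_zero]
    have h3 : (1 - star R) * T = T := by rw [sub_mul, one_mul, hRstarT, sub_zero]
    have key : (1 - star R) * ((W - T) * (1 - R)) = W * (1 - R) - T := by
      calc (1 - star R) * ((W - T) * (1 - R))
          = (1 - star R) * (W * (1 - R)) - (1 - star R) * (T * (1 - R)) := by noncomm_ring
        _ = W * (1 - R) - T := by rw [hG1, h2, h3]
    rw [← key]
    have h := conj_pos (W - T) (1 - R) hWTpos
    simpa [star_sub, star_one] using h
  have hTG : W * (1 - R) = T := by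
    have h2 : (-(T - W * (1 - R))).IsPositive := by simpa [neg_sub] using hGTpos
    have h3 := pos_antisymm_s8 hTGpos h2
    exact (sub_eq_zero.mp h3).symm
  have hBR : B * (1 - R) = 0 := by
    ext x
    simp only [ContinuousLinearMap.mul_apply, zero_apply]
    have hmem : (1 - R) x ∈ LinearMap.ker (adjoint A ∘L W : H →ₗ[ℂ] H) := by
      rw [LinearMap.mem_ker]
      show adjoint A (W ((1 - R) x)) = 0
      have h1 : W ((1 - R) x) = T x := by rw [← ContinuousLinearMap.mul_apply W (1 - R) x, hTG]
      rw [h1, ← star_eq_adjoint, ← ContinuousLinearMap.mul_apply, hAT, zero_apply]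
    rw [← hker] at hmem
    exact LinearMap.mem_ker.mp hmem
  -- Part 1
  have part1 : ∀ X : H →L[ℂ] H,
      MinusLE T (adjoint (A ∘L X ∘L B - 1) ∘L (W ∘L (A ∘L X ∘L B - 1))) := by
    intro X
    set C : H →L[ℂ] H := A ∘L X ∘L B - 1 with hC
    set E : H →L[ℂ] H := adjoint C ∘L (W ∘L C) with hE
    have hCm : C = A * X * B - 1 := rfl
    have hEm : E = star C * (W * C) := by rw [hE, star_eq_adjoint]; rfl
    have hCR : C * (1 - R) = -(1 - R) := by
      rw [hCm, sub_mul, one_mul, mul_assoc, hBR, mul_zero, zero_sub]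
    have hstarCT : star C * T = -T := by
      rw [hCm, star_sub, star_one, sub_mul, one_mul, star_mul, star_mul, mul_assoc, mul_assoc,
        hAT, mul_zero, mul_zero, zero_sub]
    have hET : E * (1 - R) = T := by
      rw [hEm, mul_assoc, mul_assoc, hCR, mul_neg, hTG, mul_neg, hstarCT, neg_neg]
    have hEsa : star E = E := by
      rw [hEm]
      simp only [star_mul, star_star, hWstar]
      rw [mul_assoc]
    have hRsidem : IsIdempotentElem (star R) := by
      unfold IsIdempotentElem
      rw [← star_mul, hRidem.eq]
    have hPidem : IsIdempotentElem (1 - star R) := hRsidem.one_sub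
    have hPE : (1 - star R) * E = T := by
      have h := congrArg star hET
      rwa [star_mul, star_sub, star_one, hEsa, hTstar] at h
    have hEadj : adjoint E = E := by rw [← star_eq_adjoint]; exact hEsa
    refine ⟨1 - star R, 1 - star R, hPidem, hPidem, ?_, ?_⟩
    · rw [← mul_def]; exact hPE.symm
    · rw [hTadj, hEadj, ← mul_def]; exact hPE.symm
  -- approximation of ker T elements by range A in the W-seminorm
  have happrox : ∀ u : H, T u = 0 → ∃ zs : ℕ → H,
      Filter.Tendsto (fun n => W (A (zs n))) Filter.atTop (nhds (W u)) := by
    have h0W : (0 : H →L[ℂ] H) ≤ W := (nonneg_iff_isPositive W).2 hW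
    set K : H →L[ℂ] H := CFC.sqrt W with hKdef
    have hKK : K * K = W := CFC.sqrt_mul_sqrt_self W h0W
    have hKsa : IsSelfAdjoint K := IsSelfAdjoint.of_nonneg (CFC.sqrt_nonneg W)
    have hKadj : adjoint K = K := isSelfAdjoint_iff'.mp hKsa
    set L : Submodule ℂ H := (LinearMap.range (K ∘L A : H →ₗ[ℂ] H)).topologicalClosure with hL
    haveI : CompleteSpace L := (Submodule.isClosed_topologicalClosure _).completeSpace_coe
    set Pi : H →L[ℂ] H := L.subtypeL ∘L L.orthogonalProjectionOnto with hPi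
    have hPisa : IsSelfAdjoint Pi := isSelfAdjoint_starProjection L
    have hPimem : ∀ y : H, Pi y ∈ L := fun y => (L.orthogonalProjectionOnto y).2
    have hPiperp : ∀ y : H, y - Pi y ∈ Lᗮ := fun y => Submodule.sub_starProjection_mem_orthogonal (K := L) y
    set T0 : H →L[ℂ] H := K * ((1 - Pi) * K) with hT0
    have happ : ∀ x : H, T0 x = K (K x - Pi (K x)) := by
      intro x
      simp [hT0, ContinuousLinearMap.mul_apply, sub_apply, ContinuousLinearMap.one_apply]
    have hinner : ∀ x : H, ⟪T0 x, x⟫ = ⟪K x - Pi (K x), K x - Pi (K x)⟫ := by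
      intro x
      have h3 := adjoint_inner_left K x (K x - Pi (K x))
      rw [hKadj] at h3
      rw [happ x, h3]
      have h2 : ⟪K x - Pi (K x), Pi (K x)⟫ = 0 :=
        inner_eq_zero_symm.mpr
          ((Submodule.mem_orthogonal L _).mp (hPiperp (K x)) _ (hPimem (K x)))
      calc ⟪K x - Pi (K x), K x⟫
          = ⟪K x - Pi (K x), (K x - Pi (K x)) + Pi (K x)⟫ := by rw [sub_add_cancel]
        _ = ⟪K x - Pi (K x), K x - Pi (K x)⟫ + ⟪K x - Pi (K x), Pi (K x)⟫ :=
            inner_add_right _ _ _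
        _ = ⟪K x - Pi (K x), K x - Pi (K x)⟫ := by rw [h2, add_zero]
    have hT0mem : T0 ∈ MSet W (LinearMap.range (A : H →ₗ[ℂ] H)) := by
      refine ⟨⟨?_, ?_⟩, ?_, ?_⟩
      · refine ContinuousLinearMap.isSelfAdjoint_iff_isSymmetric.mp ?_
        show star T0 = T0
        rw [hT0]
        simp only [star_mul, star_sub, star_one, hKsa.star_eq, hPisa.star_eq]
        rw [mul_assoc]
      · intro x
        rw [reApplyInnerSelf_apply, hinner x]
        exact inner_self_nonneg
      · have hPipos : Pi.IsPositive := by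
          refine ⟨ContinuousLinearMap.isSelfAdjoint_iff_isSymmetric.mp hPisa, fun y => ?_⟩
          rw [reApplyInnerSelf_apply]
          have h2 : ⟪Pi y, y - Pi y⟫ = 0 :=
            (Submodule.mem_orthogonal L _).mp (hPiperp y) _ (hPimem y)
          have h3 : ⟪Pi y, y⟫ = ⟪Pi y, Pi y⟫ := by
            calc ⟪Pi y, y⟫ = ⟪Pi y, Pi y + (y - Pi y)⟫ := by
                  rw [show Pi y + (y - Pi y) = y from by abel]
              _ = ⟪Pi y, Pi y⟫ + ⟪Pi y, y - Pi y⟫ := inner_add_right _ _ _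
              _ = ⟪Pi y, Pi y⟫ := by rw [h2, add_zero]
          rw [h3]
          exact inner_self_nonneg
        have key : W - T0 = star K * (Pi * K) := by
          rw [hT0, ← hKK, hKsa.star_eq]; noncomm_ring
        rw [key]
        exact conj_pos _ _ hPipos
      · rintro _ ⟨x, rfl⟩
        rw [Submodule.mem_orthogonal]
        rintro _ ⟨z, rfl⟩
        change ⟪A z, T0 x⟫ = 0
        rw [happ x]
        have h4 := adjoint_inner_right K (A z) (K x - Pi (K x))
        rw [hKadj] at h4
        rw [h4]
        exact (Submodule.mem_orthogonal L _).mp (hPiperp (K x)) _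
          (Submodule.le_topologicalClosure _ ⟨z, rfl⟩)
    have hTT0 : (T - T0).IsPositive := hTmax T0 hT0mem
    intro u hu
    have h1 : RCLike.re ⟪T0 u, u⟫ ≤ 0 := by
      have h2 := hTT0.2 u
      rw [reApplyInnerSelf_apply, sub_apply, inner_sub_left, hu, inner_zero_left, zero_sub,
        map_neg] at h2
      linarith
    have h2 : K u - Pi (K u) = 0 := by
      have h3 : RCLike.re ⟪K u - Pi (K u), K u - Pi (K u)⟫ ≤ 0 := by
        rw [← hinner u]; exact h1
      rw [inner_self_eq_norm_sq] at h3
      have h5 : ‖K u - Pi (K u)‖ = 0 := by nlinarith [norm_nonneg (K u - Pi (K u))]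
      exact norm_eq_zero.mp h5
    have h6 : K u ∈ L := by
      rw [show K u = Pi (K u) from by rwa [sub_eq_zero] at h2]
      exact hPimem _
    have h7 : K u ∈ closure (LinearMap.range (K ∘L A : H →ₗ[ℂ] H) : Set H) := by
      rw [← Submodule.topologicalClosure_coe]
      exact h6
    obtain ⟨f, hf_mem, hf_lim⟩ := mem_closure_iff_seq_limit.mp h7
    choose zs hzs using hf_mem
    refine ⟨zs, ?_⟩
    have h8 : ∀ n, W (A (zs n)) = K (f n) := by
      intro n
      rw [← hzs n]
      show W (A (zs n)) = K (K (A (zs n)))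
      rw [← ContinuousLinearMap.mul_apply K K (A (zs n)), hKK]
    have h9 : Filter.Tendsto (fun n => K (f n)) Filter.atTop (nhds (K (K u))) :=
      (K.continuous.tendsto _).comp hf_lim
    rw [show K (K u) = W u from by rw [← ContinuousLinearMap.mul_apply, hKK]] at h9
    rw [show (fun n => W (A (zs n))) = fun n => K (f n) from funext h8]
    exact h9
  -- the key factorization lemma for part 2
  have hE0 : adjoint (A ∘L (0 : H →L[ℂ] H) ∘L B - 1) ∘L
      (W ∘L (A ∘L (0 : H →L[ℂ] H) ∘L B - 1)) = W := by
    have h1 : A ∘L (0 : H →L[ℂ] H) ∘L B - 1 = -1 := by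
      rw [zero_comp, comp_zero, zero_sub]
    rw [h1]
    have h2 : adjoint (-1 : H →L[ℂ] H) = -1 := by
      rw [← star_eq_adjoint]; simp
    rw [h2]
    ext x
    simp
  have main : ∀ D' : H →L[ℂ] H,
      (∀ X : H →L[ℂ] H, ∃ P' : H →L[ℂ] H, IsIdempotentElem P' ∧
        D' = P' ∘L (adjoint (A ∘L X ∘L B - 1) ∘L (W ∘L (A ∘L X ∘L B - 1)))) →
      ∃ P' : H →L[ℂ] H, IsIdempotentElem P' ∧ D' = P' ∘L T := by
    intro D' hD'
    obtain ⟨P₀, hP₀idem, hD'W⟩ := hD' 0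
    rw [hE0] at hD'W
    have hD'S : ∀ z : H, D' (A z) = 0 := by
      intro z
      by_cases hBz : B (A z) = 0
      · have hWAz : W (A z) = 0 := by
          apply pos_apply_zero hW
          have hmem : A z ∈ LinearMap.ker (adjoint A ∘L W : H →ₗ[ℂ] H) := by
            rw [← hker]; exact LinearMap.mem_ker.mpr hBz
          have h0 : adjoint A (W (A z)) = 0 := LinearMap.mem_ker.mp hmem
          rw [← adjoint_inner_left A, h0, inner_zero_left]
        rw [hD'W]
        show P₀ (W (A z)) = 0
        rw [hWAz, map_zero]
      · set v : H := B (A z) with hv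
        set X : H →L[ℂ] H := (⟪v, v⟫)⁻¹ • ((innerSL ℂ v).smulRight z) with hX
        have hXv : X v = z := by
          rw [hX]
          simp only [smul_apply, smulRight_apply, innerSL_apply_apply, smul_smul]
          rw [inv_mul_cancel₀ (inner_self_ne_zero.mpr hBz), one_smul]
        obtain ⟨P₁, hP₁, hD'E⟩ := hD' X
        have hCz : (A ∘L X ∘L B - 1) (A z) = 0 := by
          rw [sub_apply, ContinuousLinearMap.one_apply, comp_apply, comp_apply, ← hv, hXv, sub_self]
        rw [hD'E]
        simp only [comp_apply]
        rw [hCz]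
        simp only [map_zero]
    have hkerkill : ∀ u : H, T u = 0 → D' u = 0 := by
      intro u hu
      obtain ⟨zs, hzs⟩ := happrox u hu
      have hconst : ∀ n : ℕ, D' u = P₀ (W u - W (A (zs n))) := by
        intro n
        have h1 : D' (A (zs n)) = 0 := hD'S (zs n)
        have h2 : D' u = D' (u - A (zs n)) := by rw [map_sub, h1, sub_zero]
        rw [h2, hD'W]
        show P₀ (W (u - A (zs n))) = _
        rw [map_sub]
      have hlim : Filter.Tendsto (fun n => P₀ (W u - W (A (zs n)))) Filter.atTop
          (nhds (P₀ (W u - W u))) :=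
        (P₀.continuous.tendsto _).comp (Filter.Tendsto.sub tendsto_const_nhds hzs)
      rw [sub_self, map_zero] at hlim
      have hfun : (fun n : ℕ => P₀ (W u - W (A (zs n)))) = fun _ => D' u :=
        funext fun n => (hconst n).symm
      rw [hfun] at hlim
      exact tendsto_nhds_unique tendsto_const_nhds hlim
    refine ⟨P₀, hP₀idem, ?_⟩
    ext x
    rw [comp_apply]
    have h1 : D' (R x) = 0 := by
      apply hkerkill
      have h : R x ∈ LinearMap.range (R : H →ₗ[ℂ] H) := LinearMap.mem_range_self (R : H →ₗ[ℂ] H) x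
      rw [hRrange] at h
      exact LinearMap.mem_ker.mp h
    have h2 : D' x = D' (x - R x) := by rw [map_sub, h1, sub_zero]
    rw [h2, hD'W]
    show P₀ (W (x - R x)) = P₀ (T x)
    congr 1
    have h3 : (W * (1 - R)) x = T x := by rw [hTG]
    simpa [ContinuousLinearMap.mul_apply, sub_apply] using h3
  refine ⟨part1, ?_⟩
  intro D hD
  have hEadjX : ∀ X : H →L[ℂ] H,
      adjoint (adjoint (A ∘L X ∘L B - 1) ∘L (W ∘L (A ∘L X ∘L B - 1))) =
        adjoint (A ∘L X ∘L B - 1) ∘L (W ∘L (A ∘L X ∘L B - 1)) := by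
    intro X
    rw [adjoint_comp, adjoint_comp, adjoint_adjoint, hWadj, comp_assoc]
  have hDfst : ∀ X : H →L[ℂ] H, ∃ P' : H →L[ℂ] H, IsIdempotentElem P' ∧
      D = P' ∘L (adjoint (A ∘L X ∘L B - 1) ∘L (W ∘L (A ∘L X ∘L B - 1))) := by
    intro X
    obtain ⟨P, Q, hP, hQ, h1, h2⟩ := hD X
    exact ⟨P, hP, h1⟩
  have hDsnd : ∀ X : H →L[ℂ] H, ∃ Q' : H →L[ℂ] H, IsIdempotentElem Q' ∧
      adjoint D = Q' ∘L (adjoint (A ∘L X ∘L B - 1) ∘L (W ∘L (A ∘L X ∘L B - 1))) := by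
    intro X
    obtain ⟨P, Q, hP, hQ, h1, h2⟩ := hD X
    rw [hEadjX X] at h2
    exact ⟨Q, hQ, h2⟩
  obtain ⟨P', hP', hPT⟩ := main D hDfst
  obtain ⟨Q', hQ', hQT⟩ := main (adjoint D) hDsnd
  exact ⟨P', Q', hP', hQ', hPT, by rw [hTadj]; exact hQT⟩
end
end

section
/- Let W ∈ L(H) be a positive operator, A ∈ L(H) an operator with closed range and B ∈ L(H). Then the following conditions are equivalent: (i) there exists X₀ ∈ L(H) that is a W-inverse of A in R(B), i.e. ⟨W(AX₀x − Bx), AX₀x − Bx⟩ ≤ ⟨W(Az − Bx), Az − Bx⟩ for all x, z ∈ H; (ii) range B ⊆ range A + W^{-1}((range A)^⊥); (iii) there exists X ∈ L(H) with A*W(AX − B) = 0. -/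
open ContinuousLinearMap
open scoped ComplexInnerProductSpace

noncomputable section

variable {H : Type*} [NormedAddCommGroup H] [InnerProductSpace ℂ H] [CompleteSpace H]

open Filter Topology in
/-- Douglas-type lemma via the closed graph theorem. -/
lemma douglas_aux (T C : H →L[ℂ] H) (h : ∀ x, ∃ u, T u = C x) :
    ∃ X : H →L[ℂ] H, T ∘L X = C := by
  set K := LinearMap.ker (T : H →ₗ[ℂ] H) with hK
  have key : ∀ x : H, ∃! y : H, y ∈ Kᗮ ∧ T y = C x := by
    intro x
    obtain ⟨u, hu⟩ := h x
    refine ⟨u - (K.orthogonalProjection u : H),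
      ⟨Submodule.sub_starProjection_mem_orthogonal u, ?_⟩, ?_⟩
    · have hm : ((K.orthogonalProjection u : H)) ∈ K := (K.orthogonalProjection u).2
      rw [map_sub, show T (K.orthogonalProjection u : H) = 0 from LinearMap.mem_ker.mp hm, sub_zero, hu]
    · rintro y ⟨hy1, hy2⟩
      have hmem : y - (u - (K.orthogonalProjection u : H)) ∈ K := by
        rw [LinearMap.mem_ker, ContinuousLinearMap.coe_coe, map_sub, hy2, map_sub, hu,
          show T (K.orthogonalProjection u : H) = 0 from LinearMap.mem_ker.mp (K.orthogonalProjection u).2, sub_zero, sub_self]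
      have hmem' : y - (u - (K.orthogonalProjection u : H)) ∈ Kᗮ :=
        Submodule.sub_mem _ hy1 (Submodule.sub_starProjection_mem_orthogonal u)
      have h0 : y - (u - (K.orthogonalProjection u : H)) = 0 := by
        have := (Submodule.orthogonal_disjoint K).le_bot ⟨hmem, hmem'⟩
        simpa using this
      exact sub_eq_zero.mp h0
  classical
  have funiq : ∀ x y, y ∈ Kᗮ → T y = C x → y = (key x).choose :=
    fun x y h1 h2 => ((key x).choose_spec).2 y ⟨h1, h2⟩
  have fspec : ∀ x, (key x).choose ∈ Kᗮ ∧ T ((key x).choose) = C x :=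
    fun x => ((key x).choose_spec).1
  let g : H →ₗ[ℂ] H :=
    { toFun := fun x => (key x).choose
      map_add' := by
        intro x y
        refine (funiq (x + y) ((key x).choose + (key y).choose)
          (Submodule.add_mem _ (fspec x).1 (fspec y).1) ?_).symm
        rw [map_add, (fspec x).2, (fspec y).2, map_add]
      map_smul' := by
        intro c x
        refine (funiq (c • x) (c • (key x).choose)
          (Submodule.smul_mem _ _ (fspec x).1) ?_).symm
        rw [map_smul, (fspec x).2, map_smul] }
  have hgc : ∀ (u : ℕ → H) (x y), Tendsto u atTop (𝓝 x) → Tendsto (g ∘ u) atTop (𝓝 y) →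
      y = g x := by
    intro u x y hu hgu
    refine funiq x y ?_ ?_
    · exact K.isClosed_orthogonal.mem_of_tendsto hgu
        (Eventually.of_forall fun n => (fspec (u n)).1)
    · have h1 : Tendsto (fun n => T (g (u n))) atTop (𝓝 (T y)) :=
        (T.continuous.tendsto y).comp hgu
      have h2 : Tendsto (fun n => T (g (u n))) atTop (𝓝 (C x)) := by
        have : (fun n => T (g (u n))) = fun n => C (u n) := by
          funext n; exact (fspec (u n)).2
        rw [this]
        exact (C.continuous.tendsto x).comp hu
      exact tendsto_nhds_unique h1 h2
  refine ⟨ContinuousLinearMap.ofSeqClosedGraph hgc, ?_⟩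
  ext x
  exact (fspec x).2

lemma re_inner_W_symm (W : H →L[ℂ] H) (hW : IsSelfAdjoint W) (u v : H) :
    (⟪W u, v⟫).re = (⟪W v, u⟫).re := by
  have : ⟪W v, u⟫ = ⟪v, W u⟫ := by
    conv_lhs => rw [← hW.adjoint_eq]
    exact ContinuousLinearMap.adjoint_inner_left W u v
  rw [this, ← inner_conj_symm v (W u), Complex.conj_re]

lemma expand_re (W : H →L[ℂ] H) (hW : IsSelfAdjoint W) (u v : H) :
    (⟪W (u + v), u + v⟫).re
      = (⟪W u, u⟫).re + 2 * (⟪W u, v⟫).re + (⟪W v, v⟫).re := by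
  have h := re_inner_W_symm W hW u v
  simp only [map_add, inner_add_left, inner_add_right, Complex.add_re]
  linarith

lemma quad_nonneg_imp {c d : ℝ} (hd : 0 ≤ d) (h : ∀ t : ℝ, 0 ≤ 2 * t * c + t ^ 2 * d) :
    c = 0 := by
  by_contra hc
  have hc2 : 0 < c ^ 2 := by positivity
  have hdc : 0 < d + c ^ 2 := by positivity
  set t : ℝ := -c / (d + c ^ 2) with htdef
  have ht := h t
  have key : (2 * t * c + t ^ 2 * d) * (d + c ^ 2) ^ 2 = -(c ^ 2 * (d + 2 * c ^ 2)) := by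
    rw [htdef]
    field_simp
    ring
  have h0 : 0 ≤ -(c ^ 2 * (d + 2 * c ^ 2)) := key ▸ mul_nonneg ht (by positivity)
  nlinarith

lemma adjoint_apply_eq_zero_of_mem_orthogonal (A : H →L[ℂ] H) {v : H}
    (hv : v ∈ (LinearMap.range (A : H →ₗ[ℂ] H))ᗮ) : adjoint A v = 0 := by
  refine ext_inner_right ℂ fun w => ?_
  rw [adjoint_inner_left, inner_zero_left, ← inner_conj_symm v (A w),
    hv (A w) ⟨w, rfl⟩, map_zero]

/-- equivalence of (i) `A` admits a `W`-inverse in `R(B)`;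
(ii) `range B ⊆ range A + W⁻¹((range A)^⊥)`; (iii) the normal equation `A*W(AX - B) = 0`
has a bounded solution. -/
theorem stmt18 (W A B : H →L[ℂ] H) (hW : W.IsPositive)
    (hA : IsClosed (LinearMap.range (A : H →ₗ[ℂ] H) : Set H)) :
    [∃ X₀ : H →L[ℂ] H, WInverseIn W A B X₀,
     LinearMap.range (B : H →ₗ[ℂ] H) ≤ LinearMap.range (A : H →ₗ[ℂ] H) ⊔ Submodule.comap (W : H →ₗ[ℂ] H) (LinearMap.range (A : H →ₗ[ℂ] H))ᗮ,
     ∃ X : H →L[ℂ] H, adjoint A ∘L (W ∘L (A ∘L X - B)) = 0].TFAE  := by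
  have hWpos : ∀ v : H, 0 ≤ (⟪W v, v⟫).re := fun v => by
    have := hW.2 v
    simpa [ContinuousLinearMap.reApplyInnerSelf, RCLike.re_to_complex] using this
  tfae_have 1 → 3 := by
    rintro ⟨X₀, hX₀⟩
    refine ⟨X₀, ?_⟩
    ext x
    simp only [comp_apply, sub_apply, zero_apply]
    set u := A (X₀ x) - B x with hu
    have hre : ∀ w : H, (⟪W u, A w⟫ : ℂ).re = 0 := by
      intro w
      have hq : ∀ t : ℝ, 0 ≤ 2 * t * (⟪W u, A w⟫).re + t ^ 2 * (⟪W (A w), A w⟫).re := by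
        intro t
        have h1 := hX₀ x (X₀ x + (t : ℂ) • w)
        have h2 : A (X₀ x + (t : ℂ) • w) - B x = u + (t : ℂ) • A w := by
          rw [map_add, map_smul, hu]; abel
        rw [h2, expand_re W hW.isSelfAdjoint] at h1
        have e1 : (⟪W u, (t : ℂ) • A w⟫ : ℂ).re = t * (⟪W u, A w⟫).re := by
          rw [inner_smul_right]; simp [Complex.mul_re]
        have e2 : (⟪W ((t : ℂ) • A w), (t : ℂ) • A w⟫ : ℂ).re
            = t ^ 2 * (⟪W (A w), A w⟫).re := by
          rw [map_smul, inner_smul_left, inner_smul_right]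
          simp [Complex.mul_re]
          ring
        rw [e1, e2] at h1
        linarith
      exact quad_nonneg_imp (hWpos (A w)) hq
    have hall : ∀ w : H, (⟪W u, A w⟫ : ℂ) = 0 := by
      intro w
      have h1 := hre w
      have h2 := hre (Complex.I • w)
      rw [map_smul, inner_smul_right] at h2
      simp only [Complex.mul_re, Complex.I_re, Complex.I_im] at h2
      apply Complex.ext
      · simpa using h1
      · simp only [Complex.zero_im]
        linarith
    refine ext_inner_right ℂ fun w => ?_
    rw [adjoint_inner_left, inner_zero_left]
    exact hall w
  tfae_have 3 → 1 := by
    rintro ⟨X, hX⟩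
    have hnormal : ∀ x : H, adjoint A (W (A (X x) - B x)) = 0 := by
      intro x
      have := congrFun (congrArg DFunLike.coe hX) x
      simpa [comp_apply, sub_apply] using this
    refine ⟨X, fun x z => ?_⟩
    set u := A (X x) - B x with hu
    have h2 : A z - B x = u + A (z - X x) := by
      rw [map_sub, hu]; abel
    rw [h2, expand_re W hW.isSelfAdjoint]
    have hmid : (⟪W u, A (z - X x)⟫ : ℂ) = 0 := by
      rw [← adjoint_inner_left A (z - X x) (W u), hnormal x, inner_zero_left]
    rw [hmid]
    have := hWpos (A (z - X x))
    simp only [Complex.zero_re]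
    linarith
  tfae_have 3 → 2 := by
    rintro ⟨X, hX⟩
    rintro v ⟨x, rfl⟩
    have hnormal : adjoint A (W (A (X x) - B x)) = 0 := by
      have := congrFun (congrArg DFunLike.coe hX) x
      simpa [comp_apply, sub_apply] using this
    have hmem2 : B x - A (X x) ∈ Submodule.comap (W : H →ₗ[ℂ] H) (LinearMap.range (A : H →ₗ[ℂ] H))ᗮ := by
      simp only [Submodule.mem_comap]
      intro y hy
      obtain ⟨w, rfl⟩ := hy
      rw [ContinuousLinearMap.coe_coe, ContinuousLinearMap.coe_coe, ← inner_conj_symm (A w) (W (B x - A (X x))), ← adjoint_inner_left]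
      have : W (B x - A (X x)) = -(W (A (X x) - B x)) := by
        rw [← map_neg]; congr 1; abel
      rw [this, map_neg, hnormal, neg_zero, inner_zero_left, map_zero]
    have := Submodule.add_mem_sup (LinearMap.mem_range_self (A : H →ₗ[ℂ] H) (X x)) hmem2
    simpa using this
  tfae_have 2 → 3 := by
    intro h2
    have key : ∀ x : H, ∃ u, (adjoint A ∘L (W ∘L A)) u = (adjoint A ∘L (W ∘L B)) x := by
      intro x
      obtain ⟨a, ⟨u, rfl⟩, n, hn, hsum⟩ := Submodule.mem_sup.mp (h2 ⟨x, rfl⟩)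
      refine ⟨u, ?_⟩
      simp only [comp_apply]
      rw [← show A u + n = B x from hsum, map_add, map_add]
      have : adjoint A (W n) = 0 :=
        adjoint_apply_eq_zero_of_mem_orthogonal A (Submodule.mem_comap.mp hn)
      rw [this, add_zero]
    obtain ⟨X, hX⟩ := douglas_aux (adjoint A ∘L (W ∘L A)) (adjoint A ∘L (W ∘L B)) key
    refine ⟨X, ?_⟩
    ext x
    have := congrFun (congrArg DFunLike.coe hX) x
    simp only [comp_apply] at this
    simp only [comp_apply, sub_apply, zero_apply, map_sub, this, sub_self]
  tfae_finish
end
end
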